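/- Let V ⊆ {0,1}^n be a nonempty finite set of 0/1 vectors, each having exactly k coordinates equal to 1, and let P = conv(V) ⊆ ℝ^n. Suppose every edge of P is parallel to e_i - e_j for some i ≠ j. Then the family B = {supp(v) : v an extreme point of P} of supports of the vertices of P satisfies the matroid base exchange axiom: for all B₁, B₂ ∈ B and all i ∈ B₁ \ B₂ there exists j ∈ B₂ \ B₁ with (B₁ \ {i}) ∪ {j} ∈ B. Hence P is the base polytope of a matroid. -/

import Mathlib

open Finset

variable {n : ℕ}

abbrev E (n : ℕ) := Fin n → ℝ

-- max of a linear functional over a convex hull of a finset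
lemma hull_le_max (W : Finset (E n)) (f : E n →L[ℝ] ℝ) (M : ℝ)
    (h : ∀ v ∈ W, f v ≤ M) :
    ∀ z ∈ convexHull ℝ (W : Set (E n)), f z ≤ M := by
  have : (W : Set (E n)) ⊆ {z | f z ≤ M} := fun v hv => h v hv
  have hconv : Convex ℝ {z : E n | f z ≤ M} := convex_halfSpace_le (f.toLinearMap.isLinear) M
  exact fun z hz => convexHull_min this hconv hz

lemma hull_ge_min (W : Finset (E n)) (f : E n →L[ℝ] ℝ) (M : ℝ)
    (h : ∀ v ∈ W, M ≤ f v) :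
    ∀ z ∈ convexHull ℝ (W : Set (E n)), M ≤ f z := by
  have : (W : Set (E n)) ⊆ {z | M ≤ f z} := fun v hv => h v hv
  have hconv : Convex ℝ {z : E n | M ≤ f z} := convex_halfSpace_ge (f.toLinearMap.isLinear) M
  exact fun z hz => convexHull_min this hconv hz

-- extreme point of bigger set is extreme point of smaller
lemma extremePoint_mono {A B : Set (E n)} (hBA : B ⊆ A) {x : E n} (hxB : x ∈ B)
    (hx : x ∈ A.extremePoints ℝ) : x ∈ B.extremePoints ℝ :=
  inter_extremePoints_subset_extremePoints_of_subset hBA ⟨hxB, hx⟩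

-- an extreme point of conv W is not in the hull of the other points
lemma extremePoint_not_mem_hull_erase {W : Finset (E n)} {x : E n}
    (hx : x ∈ (convexHull ℝ (W : Set (E n))).extremePoints ℝ) :
    x ∉ convexHull ℝ ((W.erase x : Finset (E n)) : Set (E n)) := by
  intro hmem
  have hsub : convexHull ℝ ((W.erase x : Finset (E n)) : Set (E n)) ⊆
      convexHull ℝ (W : Set (E n)) :=
    convexHull_mono (by exact_mod_cast Finset.erase_subset x W)
  have := extremePoint_mono hsub hmem hx
  have hxW : x ∈ (W.erase x : Finset (E n)) := by
    exact_mod_cast extremePoints_convexHull_subset this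
  simp at hxW

-- strict separation of an extreme point from the other points
lemma exists_separator {W : Finset (E n)} {x : E n}
    (hx : x ∈ (convexHull ℝ (W : Set (E n))).extremePoints ℝ) :
    ∃ h : E n →L[ℝ] ℝ, ∀ v ∈ W, v ≠ x → h v < h x := by
  by_cases hempty : (W.erase x).Nonempty
  · have hclosed : IsClosed (convexHull ℝ ((W.erase x : Finset (E n)) : Set (E n))) :=
      ((W.erase x).finite_toSet.isCompact_convexHull ℝ).isClosed
    have hconv : Convex ℝ (convexHull ℝ ((W.erase x : Finset (E n)) : Set (E n))) :=
      convex_convexHull _ _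
    obtain ⟨f, u, hfu, hub⟩ := geometric_hahn_banach_closed_point hconv hclosed
      (extremePoint_not_mem_hull_erase hx)
    refine ⟨f, fun v hv hvx => ?_⟩
    have : f v < u := hfu v (subset_convexHull ℝ _ (by exact_mod_cast Finset.mem_erase.2 ⟨hvx, hv⟩))
    linarith
  · refine ⟨0, fun v hv hvx => ?_⟩
    exact absurd (Finset.mem_erase.2 ⟨hvx, hv⟩) (by simpa [Finset.not_nonempty_iff_eq_empty.1 hempty])

-- the argmax face of a finset hull is the hull of the argmax vertices
lemma argmax_face (W : Finset (E n)) (f : E n →L[ℝ] ℝ) (x : E n) (hxW : x ∈ W)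
    (hmax : ∀ v ∈ W, f v ≤ f x) :
    {z ∈ convexHull ℝ (W : Set (E n)) | ∀ y ∈ convexHull ℝ (W : Set (E n)), f y ≤ f z}
      = convexHull ℝ ((W.filter fun v => f v = f x : Finset (E n)) : Set (E n)) := by
  have hmaxhull : ∀ z ∈ convexHull ℝ (W : Set (E n)), f z ≤ f x := hull_le_max W f (f x) hmax
  ext z
  constructor
  · rintro ⟨hz, hopt⟩
    have hzx : f z = f x := le_antisymm (hmaxhull z hz)
      (hopt x (subset_convexHull ℝ _ (by exact_mod_cast hxW)))
    rw [Finset.convexHull_eq] at hz ⊢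
    obtain ⟨w, hw0, hw1, hwz⟩ := hz
    have key : ∀ v ∈ W, f v < f x → w v = 0 := by
      by_contra hcon
      push_neg at hcon
      obtain ⟨v0, hv0W, hv0lt, hv0ne⟩ := hcon
      have hv0pos : 0 < w v0 := lt_of_le_of_ne (hw0 v0 hv0W) (Ne.symm hv0ne)
      have hfz : f z = ∑ v ∈ W, w v * f v := by
        rw [← hwz, Finset.centerMass, hw1]
        simp [map_sum, map_smul, smul_eq_mul]
      have hlt : ∑ v ∈ W, w v * f v < ∑ v ∈ W, w v * f x := by
        apply Finset.sum_lt_sum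
        · intro v hv
          exact mul_le_mul_of_nonneg_left (hmax v hv) (hw0 v hv)
        · exact ⟨v0, hv0W, by nlinarith⟩
      rw [← hfz] at hlt
      simp only [← Finset.sum_mul, hw1, one_mul] at hlt
      exact absurd hzx (ne_of_lt hlt)
    have hw1' : ∑ v ∈ W.filter (fun v => f v = f x), w v = 1 := by
      rw [← hw1, Finset.sum_filter]
      apply Finset.sum_congr rfl
      intro v hv
      by_cases h : f v = f x
      · simp [h]
      · simp [h, key v hv (lt_of_le_of_ne (hmax v hv) h)]
    have hsum' : ∑ v ∈ W.filter (fun v => f v = f x), w v • v = ∑ v ∈ W, w v • v := by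
      rw [Finset.sum_filter]
      apply Finset.sum_congr rfl
      intro v hv
      by_cases h : f v = f x
      · simp [h]
      · simp [h, key v hv (lt_of_le_of_ne (hmax v hv) h)]
    refine ⟨w, fun y hy => hw0 y (Finset.mem_filter.1 hy).1, hw1', ?_⟩
    rw [← hwz, Finset.centerMass, Finset.centerMass, hw1, hw1']
    simp only [id_eq]
    rw [hsum']
  · intro hz
    have hsub : ((W.filter fun v => f v = f x : Finset (E n)) : Set (E n)) ⊆ (W : Set (E n)) := by
      exact_mod_cast Finset.filter_subset _ _
    have hzW : z ∈ convexHull ℝ (W : Set (E n)) := convexHull_mono hsub hz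
    refine ⟨hzW, fun y hy => ?_⟩
    have hge : f x ≤ f z := hull_ge_min _ f (f x)
      (fun v hv => le_of_eq ((Finset.mem_filter.1 hv).2).symm) z hz
    exact le_trans (hmaxhull y hy) hge

lemma exists_vertex_min {W : Finset (E n)} (hne : W.Nonempty) (f : E n →L[ℝ] ℝ)
    {z : E n} (hz : z ∈ convexHull ℝ (W : Set (E n))) :
    ∃ v ∈ W, f v ≤ f z := by
  obtain ⟨v, hvW, hv⟩ := Finset.exists_mem_eq_inf' hne (fun v => f v)
  refine ⟨v, hvW, ?_⟩
  rw [← hv]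
  exact hull_ge_min W f _ (fun u hu => Finset.inf'_le _ hu) z hz

-- an endpoint of a nondegenerate segment is an extreme point of it
lemma endpoint_extreme {a b : E n} (hab : a ≠ b) :
    b ∈ (segment ℝ a b).extremePoints ℝ := by
  obtain ⟨i, hi⟩ : ∃ i, a i ≠ b i := by
    by_contra h
    push_neg at h
    exact hab (funext h)
  -- choose f with f a < f b
  obtain ⟨f, hfab⟩ : ∃ f : E n →L[ℝ] ℝ, f a < f b := by
    rcases lt_or_gt_of_ne hi with h | h
    · exact ⟨ContinuousLinearMap.proj i, h⟩
    · exact ⟨-ContinuousLinearMap.proj i, by simpa using neg_lt_neg h⟩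
  have hseg : ∀ z ∈ segment ℝ a b, f z ≤ f b ∧ (f z = f b → z = b) := by
    rintro z ⟨s, t, hs, ht, hst, rfl⟩
    have hfz : f (s • a + t • b) = s * f a + t * f b := by simp
    have hkey : s * f a ≤ s * f b := mul_le_mul_of_nonneg_left hfab.le hs
    have hsum : s * f b + t * f b = f b := by rw [← add_mul, hst, one_mul]
    constructor
    · rw [hfz]
      linarith
    · intro hzeq
      rw [hfz] at hzeq
      have hs0 : s = 0 := by
        by_contra hs0
        have hspos : 0 < s := lt_of_le_of_ne hs (Ne.symm hs0)
        have : s * f a < s * f b := mul_lt_mul_of_pos_left hfab hspos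
        linarith
      have ht1 : t = 1 := by linarith
      rw [hs0, ht1]
      simp
  refine ⟨⟨0, 1, by norm_num, by norm_num, by norm_num, by simp⟩, ?_⟩
  rintro z₁ hz₁ z₂ hz₂ hb
  obtain ⟨s, t, hs, ht, hst, heq⟩ := hb
  have h1 := hseg z₁ hz₁
  have h2 := hseg z₂ hz₂
  have hfb : f b = s * f z₁ + t * f z₂ := by rw [← heq]; simp
  have hsum : s * f b + t * f b = f b := by rw [← add_mul, hst, one_mul]
  have hfz1 : f z₁ = f b := by
    by_contra hne
    have hlt : f z₁ < f b := lt_of_le_of_ne h1.1 hne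
    have h1' : s * f z₁ < s * f b := mul_lt_mul_of_pos_left hlt hs
    have h2' : t * f z₂ ≤ t * f b := mul_le_mul_of_nonneg_left h2.1 ht.le
    linarith
  have hfz2 : f z₂ = f b := by
    by_contra hne
    have hlt : f z₂ < f b := lt_of_le_of_ne h2.1 hne
    have h2' : t * f z₂ < t * f b := mul_lt_mul_of_pos_left hlt ht
    have h1' : s * f z₁ ≤ s * f b := mul_le_mul_of_nonneg_left h1.1 hs.le
    linarith
  exact h1.2 hfz1

lemma improving_edge (N : ℕ) :
    ∀ (W : Finset (E n)) (w : E n →L[ℝ] ℝ) (x : E n),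
      W.card ≤ N →
      x ∈ (convexHull ℝ (W : Set (E n))).extremePoints ℝ →
      (∃ y ∈ convexHull ℝ (W : Set (E n)), w y < w x) →
      ∃ v ∈ (convexHull ℝ (W : Set (E n))).extremePoints ℝ,
        w v < w x ∧ IsExtreme ℝ (convexHull ℝ (W : Set (E n))) (segment ℝ x v) := by
  induction N with
  | zero =>
    intro W w x hcard hx _
    have hxW : x ∈ W := by exact_mod_cast extremePoints_convexHull_subset hx
    simp [Finset.card_eq_zero.1 (Nat.le_zero.1 hcard)] at hxW
  | succ N ih =>
    intro W w x hcard hx hy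
    have hxW : x ∈ W := by exact_mod_cast extremePoints_convexHull_subset hx
    have hne : W.Nonempty := ⟨x, hxW⟩
    -- a vertex with strictly smaller w-value
    obtain ⟨y, hyhull, hywx⟩ := hy
    obtain ⟨u, huW, huy⟩ := exists_vertex_min hne w hyhull
    have huwx : w u < w x := lt_of_le_of_lt huy hywx
    have hux : u ≠ x := fun h => absurd huwx (by rw [h]; exact lt_irrefl _)
    by_cases hcol : ∀ i : Fin n, ∃ α c : ℝ, ∀ v ∈ W, v i = α * w v + c
    · -- collinear case: the hull is a segment
      choose α c hαc using hcol
      obtain ⟨u₀, hu₀W, hu₀⟩ := Finset.exists_mem_eq_inf' hne (fun v => w v)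
      obtain ⟨m, hmW, hm⟩ := Finset.exists_mem_eq_sup' hne (fun v => w v)
      have hu₀le : ∀ v ∈ W, w u₀ ≤ w v := fun v hv => hu₀ ▸ Finset.inf'_le _ hv
      have hmge : ∀ v ∈ W, w v ≤ w m := fun v hv => hm ▸ Finset.le_sup' _ hv
      have hu₀x : w u₀ < w x := lt_of_le_of_lt (hu₀le u huW) huwx
      have hd : 0 < w m - w u₀ := by
        have := hmge x hxW
        linarith
      -- every point of W is on the segment [u₀, m]
      have hsegsub : (W : Set (E n)) ⊆ segment ℝ u₀ m := by
        intro v hv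
        have hvW : v ∈ W := hv
        set d := w m - w u₀ with hd_def
        refine ⟨(w m - w v)/d, (w v - w u₀)/d, ?_, ?_, ?_, ?_⟩
        · apply div_nonneg _ hd.le
          have := hmge v hvW; linarith
        · apply div_nonneg _ hd.le
          have := hu₀le v hvW; linarith
        · field_simp
          linarith
        · funext i
          have h1 := hαc i v hvW
          have h2 := hαc i u₀ hu₀W
          have h3 := hαc i m hmW
          have heval : (((w m - w v)/d) • u₀ + ((w v - w u₀)/d) • m) i
              = (w m - w v)/d * u₀ i + (w v - w u₀)/d * m i := rfl
          rw [heval, h1, h2, h3]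
          field_simp
          ring
      have hhull : convexHull ℝ (W : Set (E n)) = segment ℝ u₀ m := by
        apply le_antisymm
        · exact convexHull_min hsegsub (convex_segment _ _)
        · rw [← convexHull_pair]
          apply convexHull_mono
          intro p hp
          rcases hp with h | h
          · exact h ▸ (by exact_mod_cast hu₀W)
          · exact h ▸ (by exact_mod_cast hmW)
      have hu₀m : u₀ ≠ m := fun h => by rw [h] at hd; linarith
      -- x is an extreme point of the segment, hence an endpoint
      have hx' : x ∈ (segment ℝ u₀ m).extremePoints ℝ := hhull ▸ hx
      have hxum : x ∈ ({u₀, m} : Set (E n)) := by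
        rw [← convexHull_pair] at hx'
        exact extremePoints_convexHull_subset hx'
      have hxm : x = m := by
        rcases hxum with h | h
        · exact absurd hu₀x (by rw [h]; exact lt_irrefl _)
        · exact h
      refine ⟨u₀, ?_, hu₀x, ?_⟩
      · rw [hhull, segment_symm]
        exact endpoint_extreme (Ne.symm hu₀m)
      · rw [hhull, hxm, segment_symm]
    · -- non-collinear case
      push_neg at hcol
      obtain ⟨i, hi⟩ := hcol
      obtain ⟨h₀, hsep₀⟩ := exists_separator hx
      -- get a separator that is not an affine function of w on W
      obtain ⟨h, hsep, hnondeg⟩ :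
          ∃ h : E n →L[ℝ] ℝ, (∀ v ∈ W, v ≠ x → h v < h x) ∧
            ¬∃ α c : ℝ, ∀ v ∈ W, h v = α * w v + c := by
        by_cases hdeg : ∃ α c : ℝ, ∀ v ∈ W, h₀ v = α * w v + c
        · obtain ⟨α₀, c₀, hα₀⟩ := hdeg
          have herne : (W.erase x).Nonempty := ⟨u, Finset.mem_erase.2 ⟨hux, huW⟩⟩
          set δ := (W.erase x).inf' herne (fun v => (h₀ x - h₀ v)/(1 + |x i - v i|)) with hδ
          have hδpos : 0 < δ := by
            rw [hδ, Finset.lt_inf'_iff]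
            intro v hv
            obtain ⟨hvx, hvW⟩ := Finset.mem_erase.1 hv
            apply div_pos (by linarith [hsep₀ v hvW hvx]) (by positivity)
          refine ⟨h₀ + δ • ContinuousLinearMap.proj i, fun v hvW hvx => ?_, ?_⟩
          · have hle : δ ≤ (h₀ x - h₀ v)/(1 + |x i - v i|) := by
              rw [hδ]
              exact Finset.inf'_le _ (Finset.mem_erase.2 ⟨hvx, hvW⟩)
            have hpos : (0:ℝ) < 1 + |x i - v i| := by positivity
            have hmul : δ * (1 + |x i - v i|) ≤ h₀ x - h₀ v := by
              rw [← le_div_iff₀ hpos]; exact hle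
            have habs : δ * (v i - x i) ≤ δ * |x i - v i| := by
              apply mul_le_mul_of_nonneg_left _ hδpos.le
              rw [abs_sub_comm]
              exact le_abs_self _
            simp only [ContinuousLinearMap.add_apply, ContinuousLinearMap.smul_apply,
              ContinuousLinearMap.proj_apply, smul_eq_mul]
            nlinarith
          · rintro ⟨α, c, hαc⟩
            obtain ⟨v, hvW, hvne⟩ := hi ((α - α₀)/δ) ((c - c₀)/δ)
            apply hvne
            have h1 := hαc v hvW
            have h2 := hα₀ v hvW
            simp only [ContinuousLinearMap.add_apply, ContinuousLinearMap.smul_apply,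
              ContinuousLinearMap.proj_apply, smul_eq_mul] at h1
            field_simp
            linarith
        · exact ⟨h₀, hsep₀, hdeg⟩
      -- the set of improving vertices
      set T := W.filter (fun v => w v < w x) with hT
      have hTne : T.Nonempty := ⟨u, Finset.mem_filter.2 ⟨huW, huwx⟩⟩
      have hTprop : ∀ v ∈ T, v ∈ W ∧ w v < w x ∧ v ≠ x := by
        intro v hv
        obtain ⟨h1, h2⟩ := Finset.mem_filter.1 hv
        exact ⟨h1, h2, fun he => absurd h2 (by rw [he]; exact lt_irrefl _)⟩
      set tstar := T.inf' hTne (fun v => (h x - h v)/(w x - w v)) with htstar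
      obtain ⟨vstar, hvstarT, hvstar⟩ := Finset.exists_mem_eq_inf' hTne
        (fun v => (h x - h v)/(w x - w v))
      have htpos : 0 < tstar := by
        rw [htstar, Finset.lt_inf'_iff]
        intro v hv
        obtain ⟨h1, h2, h3⟩ := hTprop v hv
        exact div_pos (by linarith [hsep v h1 h3]) (by linarith)
      set f := h - tstar • w with hf
      have hfapp : ∀ z, f z = h z - tstar * w z := by
        intro z
        simp [hf, ContinuousLinearMap.sub_apply, ContinuousLinearMap.smul_apply, smul_eq_mul]
      have hfmax : ∀ v ∈ W, f v ≤ f x := by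
        intro v hvW
        by_cases hvx : v = x
        · rw [hvx]
        · rw [hfapp, hfapp]
          by_cases hw : w v < w x
          · have hvT : v ∈ T := Finset.mem_filter.2 ⟨hvW, hw⟩
            have hle : tstar ≤ (h x - h v)/(w x - w v) := by
              rw [htstar]; exact Finset.inf'_le _ hvT
            have hpos : (0:ℝ) < w x - w v := by linarith
            have : tstar * (w x - w v) ≤ h x - h v := by
              rw [← le_div_iff₀ hpos]; exact hle
            nlinarith
          · push_neg at hw
            have h1 : h v < h x := hsep v hvW hvx
            have h2 : tstar * w x ≤ tstar * w v := mul_le_mul_of_nonneg_left hw htpos.le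
            linarith
      have hfvstar : f vstar = f x := by
        obtain ⟨h1, h2, h3⟩ := hTprop vstar hvstarT
        have hpos : (0:ℝ) < w x - w vstar := by linarith
        have : tstar * (w x - w vstar) = h x - h vstar := by
          rw [htstar, hvstar]
          field_simp
        rw [hfapp, hfapp]
        nlinarith
      set W' := W.filter (fun v => f v = f x) with hW'
      have hface := argmax_face W f x hxW hfmax
      -- W' is strictly smaller than W
      have hW'card : W'.card ≤ N := by
        have hstrict : ∃ v ∈ W, ¬(f v = f x) := by
          by_contra hall
          push_neg at hall
          apply hnondeg
          refine ⟨tstar, h x - tstar * w x, fun v hvW => ?_⟩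
          have := hall v hvW
          rw [hfapp, hfapp] at this
          linarith
        obtain ⟨v₀, hv₀W, hv₀⟩ := hstrict
        have : W' ⊂ W := by
          refine Finset.ssubset_iff_of_subset (Finset.filter_subset _ _) |>.2 ?_
          exact ⟨v₀, hv₀W, fun hmem => hv₀ (Finset.mem_filter.1 hmem).2⟩
        have := Finset.card_lt_card this
        omega
      have hxW' : x ∈ W' := Finset.mem_filter.2 ⟨hxW, rfl⟩
      have hsubW' : convexHull ℝ (W' : Set (E n)) ⊆ convexHull ℝ (W : Set (E n)) :=
        convexHull_mono (by exact_mod_cast Finset.filter_subset _ _)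
      have hxext' : x ∈ (convexHull ℝ (W' : Set (E n))).extremePoints ℝ :=
        extremePoint_mono hsubW' (subset_convexHull ℝ _ (by exact_mod_cast hxW')) hx
      have hvstarW' : vstar ∈ W' := Finset.mem_filter.2 ⟨(hTprop vstar hvstarT).1, hfvstar⟩
      have hy' : ∃ y ∈ convexHull ℝ (W' : Set (E n)), w y < w x :=
        ⟨vstar, subset_convexHull ℝ _ (by exact_mod_cast hvstarW'), (hTprop vstar hvstarT).2.1⟩
      obtain ⟨v, hvext, hvw, hvedge⟩ := ih W' w x hW'card hxext' hy'
      -- the face is extreme in the hull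
      have hexp : IsExposed ℝ (convexHull ℝ (W : Set (E n)))
          {z ∈ convexHull ℝ (W : Set (E n)) |
            ∀ y ∈ convexHull ℝ (W : Set (E n)), f y ≤ f z} := fun _ => ⟨f, rfl⟩
      have hFext : IsExtreme ℝ (convexHull ℝ (W : Set (E n)))
          (convexHull ℝ (W' : Set (E n))) := by
        rw [← hface]
        exact hexp.isExtreme
      exact ⟨v, hFext.extremePoints_subset_extremePoints hvext, hvw, hFext.trans hvedge⟩

/-- If `V ⊆ {0,1}ⁿ` is a nonempty finite set of 0/1 vectors, each with
exactly `k` ones, and every edge of `P = conv(V)` is parallel to some `e_i - e_j`, then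
the supports of the vertices of `P` satisfy the matroid base exchange axiom. -/
theorem edges_parallel_root_directions_implies_base_exchange
    (n k : ℕ) (V : Finset (Fin n → ℝ)) (hne : V.Nonempty)
    (h01 : ∀ v ∈ V, ∀ i, v i = 0 ∨ v i = 1)
    (hk : ∀ v ∈ V, (Finset.univ.filter fun i => v i = 1).card = k)
    (P : Set (Fin n → ℝ)) (hP : P = convexHull ℝ (V : Set (Fin n → ℝ)))
    (hedge : ∀ x y : Fin n → ℝ, x ≠ y → IsExtreme ℝ P (segment ℝ x y) →
      ∃ i j : Fin n, i ≠ j ∧ ∃ c : ℝ,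
        y - x = c • ((Pi.single i 1 : Fin n → ℝ) - Pi.single j 1)) :
    ∀ x ∈ P.extremePoints ℝ, ∀ y ∈ P.extremePoints ℝ,
      ∀ i ∈ {i : Fin n | x i = 1} \ {i : Fin n | y i = 1},
        ∃ j ∈ {i : Fin n | y i = 1} \ {i : Fin n | x i = 1},
          ∃ z ∈ P.extremePoints ℝ,
            {i : Fin n | z i = 1} = insert j ({i : Fin n | x i = 1} \ {i}) := by
  classical
  intro x hx y hy i hi
  obtain ⟨hxi1, hyi1⟩ := hi
  simp only [Set.mem_setOf_eq] at hxi1 hyi1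
  subst hP
  have hxV : x ∈ V := by exact_mod_cast extremePoints_convexHull_subset hx
  have hyV : y ∈ V := by exact_mod_cast extremePoints_convexHull_subset hy
  have hyi0 : y i = 0 := (h01 y hyV i).resolve_right hyi1
  -- the support union
  set S : Finset (Fin n) :=
    (Finset.univ.filter fun a => x a = 1) ∪ (Finset.univ.filter fun a => y a = 1) with hS
  set φ : E n →L[ℝ] ℝ := ∑ a ∈ S, ContinuousLinearMap.proj a with hφ
  have hφapp : ∀ z : E n, φ z = ∑ a ∈ S, z a := by
    intro z
    simp [hφ, ContinuousLinearMap.sum_apply, ContinuousLinearMap.proj_apply]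
  have hφcard : ∀ v ∈ V, φ v = ((S.filter fun a => v a = 1).card : ℝ) := by
    intro v hv
    have hstep : (∑ a ∈ S, v a) = ∑ a ∈ S, (if v a = 1 then (1:ℝ) else 0) :=
      Finset.sum_congr rfl (fun a _ => by rcases h01 v hv a with h | h <;> simp [h])
    rw [hφapp, hstep, Finset.sum_boole]
  have hφle : ∀ v ∈ V, φ v ≤ (k : ℝ) := by
    intro v hv
    rw [hφcard v hv]
    have : (S.filter fun a => v a = 1).card ≤ (Finset.univ.filter fun a => v a = 1).card :=
      Finset.card_le_card (Finset.filter_subset_filter _ (Finset.subset_univ S))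
    exact_mod_cast this.trans_eq (hk v hv)
  have hsupp_sub : ∀ v ∈ V, φ v = (k : ℝ) → ∀ a, v a = 1 → a ∈ S := by
    intro v hv hφv a hva
    have hcards : (S.filter fun a => v a = 1).card = (Finset.univ.filter fun a => v a = 1).card := by
      rw [hφcard v hv] at hφv
      rw [hk v hv]
      exact_mod_cast hφv
    have heq := Finset.eq_of_subset_of_card_le
      (Finset.filter_subset_filter _ (Finset.subset_univ S)) (le_of_eq hcards.symm)
    have : a ∈ S.filter fun a => v a = 1 := by
      rw [heq]
      exact Finset.mem_filter.2 ⟨Finset.mem_univ a, hva⟩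
    exact (Finset.mem_filter.1 this).1
  have hφfull : ∀ v ∈ V, (∀ a, v a = 1 → a ∈ S) → φ v = (k : ℝ) := by
    intro v hv hsub
    have hsets : S.filter (fun a => v a = 1) = Finset.univ.filter (fun a => v a = 1) := by
      apply Finset.Subset.antisymm (Finset.filter_subset_filter _ (Finset.subset_univ S))
      intro a ha
      obtain ⟨-, hva⟩ := Finset.mem_filter.1 ha
      exact Finset.mem_filter.2 ⟨hsub a hva, hva⟩
    rw [hφcard v hv, hsets, hk v hv]
  have hsuppx : ∀ a, x a = 1 → a ∈ S := by
    intro a ha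
    exact Finset.mem_union_left _ (Finset.mem_filter.2 ⟨Finset.mem_univ a, ha⟩)
  have hsuppy : ∀ a, y a = 1 → a ∈ S := by
    intro a ha
    exact Finset.mem_union_right _ (Finset.mem_filter.2 ⟨Finset.mem_univ a, ha⟩)
  have hφx : φ x = (k : ℝ) := hφfull x hxV hsuppx
  have hφy : φ y = (k : ℝ) := hφfull y hyV hsuppy
  have hmax : ∀ v ∈ V, φ v ≤ φ x := fun v hv => hφx ▸ hφle v hv
  set W' := V.filter (fun v => φ v = φ x) with hW'
  have hface := argmax_face V φ x hxV hmax
  have hxW' : x ∈ W' := Finset.mem_filter.2 ⟨hxV, rfl⟩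
  have hyW' : y ∈ W' := Finset.mem_filter.2 ⟨hyV, by rw [hφy, hφx]⟩
  have hsubW' : convexHull ℝ (W' : Set (E n)) ⊆ convexHull ℝ (V : Set (E n)) :=
    convexHull_mono (by exact_mod_cast Finset.filter_subset _ _)
  have hxext' : x ∈ (convexHull ℝ (W' : Set (E n))).extremePoints ℝ :=
    extremePoint_mono hsubW' (subset_convexHull ℝ _ (by exact_mod_cast hxW')) hx
  set w : E n →L[ℝ] ℝ := ContinuousLinearMap.proj i with hw
  have hwy : ∃ y' ∈ convexHull ℝ (W' : Set (E n)), w y' < w x := by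
    refine ⟨y, subset_convexHull ℝ _ (by exact_mod_cast hyW'), ?_⟩
    simp only [hw, ContinuousLinearMap.proj_apply, hyi0, hxi1]
    norm_num
  obtain ⟨v, hvext, hvw, hvedge⟩ := improving_edge W'.card W' w x le_rfl hxext' hwy
  -- lift the edge to the whole polytope
  have hexp : IsExposed ℝ (convexHull ℝ (V : Set (E n)))
      {z ∈ convexHull ℝ (V : Set (E n)) |
        ∀ y ∈ convexHull ℝ (V : Set (E n)), φ y ≤ φ z} := fun _ => ⟨φ, rfl⟩
  have hFext : IsExtreme ℝ (convexHull ℝ (V : Set (E n)))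
      (convexHull ℝ (W' : Set (E n))) := by
    rw [← hface]
    exact hexp.isExtreme
  have hvextP : v ∈ (convexHull ℝ (V : Set (E n))).extremePoints ℝ :=
    hFext.extremePoints_subset_extremePoints hvext
  have hvV : v ∈ V := by exact_mod_cast extremePoints_convexHull_subset hvextP
  have hvW' : v ∈ W' := by exact_mod_cast extremePoints_convexHull_subset hvext
  have hedgeP : IsExtreme ℝ (convexHull ℝ (V : Set (E n))) (segment ℝ x v) :=
    hFext.trans hvedge
  have hxv : x ≠ v := by
    intro h
    rw [← h] at hvw
    exact lt_irrefl _ hvw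
  -- apply the edge-direction hypothesis
  obtain ⟨a, b, hab, c, hvec⟩ := hedge x v hxv hedgeP
  have hcoord : ∀ ℓ, v ℓ - x ℓ =
      c * ((if ℓ = a then (1:ℝ) else 0) - (if ℓ = b then (1:ℝ) else 0)) := by
    intro ℓ
    have := congrFun hvec ℓ
    simpa [Pi.single_apply, Pi.sub_apply, Pi.smul_apply, smul_eq_mul] using this
  have hvi0 : v i = 0 := by
    have hwv : v i < x i := hvw
    rcases h01 v hvV i with h | h
    · exact h
    · rw [h, hxi1] at hwv; exact absurd hwv (lt_irrefl _)
  have hvix : v i - x i = -1 := by rw [hvi0, hxi1]; norm_num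
  -- determine j
  have hij : i = a ∨ i = b := by
    by_contra hcon
    push_neg at hcon
    have := hcoord i
    rw [hvix, if_neg hcon.1, if_neg hcon.2] at this
    norm_num at this
  obtain ⟨j, hji, hvj1, hxj0, hother⟩ :
      ∃ j, j ≠ i ∧ v j = 1 ∧ x j = 0 ∧ ∀ ℓ, ℓ ≠ i → ℓ ≠ j → v ℓ = x ℓ := by
    rcases hij with h | h
    · -- i = a, so c = -1 and j = b
      subst h
      have hc : c = -1 := by
        have := hcoord i
        rw [hvix, if_pos rfl, if_neg hab] at this
        linarith
      have hvb : v b - x b = 1 := by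
        have := hcoord b
        rw [if_neg (Ne.symm hab), if_pos rfl, hc] at this
        linarith
      have hvb1 : v b = 1 := by
        rcases h01 v hvV b with h1 | h1
        · exfalso
          rcases h01 x hxV b with h2 | h2 <;> rw [h1, h2] at hvb <;> norm_num at hvb
        · exact h1
      have hxb0 : x b = 0 := by
        rcases h01 x hxV b with h2 | h2
        · exact h2
        · rw [hvb1, h2] at hvb; norm_num at hvb
      refine ⟨b, Ne.symm hab, hvb1, hxb0, fun ℓ hℓi hℓb => ?_⟩
      have := hcoord ℓ
      rw [if_neg hℓi, if_neg hℓb] at this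
      linarith
    · -- i = b, so c = 1 and j = a
      subst h
      have hc : c = 1 := by
        have := hcoord i
        rw [hvix, if_neg (Ne.symm hab), if_pos rfl] at this
        linarith
      have hva : v a - x a = 1 := by
        have := hcoord a
        rw [if_pos rfl, if_neg hab, hc] at this
        linarith
      have hva1 : v a = 1 := by
        rcases h01 v hvV a with h1 | h1
        · exfalso
          rcases h01 x hxV a with h2 | h2 <;> rw [h1, h2] at hva <;> norm_num at hva
        · exact h1
      have hxa0 : x a = 0 := by
        rcases h01 x hxV a with h2 | h2
        · exact h2
        · rw [hva1, h2] at hva; norm_num at hva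
      refine ⟨a, hab, hva1, hxa0, fun ℓ hℓi hℓa => ?_⟩
      have := hcoord ℓ
      rw [if_neg hℓa, if_neg hℓi] at this
      linarith
  -- j is in the support of y but not x
  have hφv : φ v = (k : ℝ) := by
    have := (Finset.mem_filter.1 hvW').2
    rw [this, hφx]
  have hjS : j ∈ S := hsupp_sub v hvV hφv j hvj1
  have hyj1 : y j = 1 := by
    rcases Finset.mem_union.1 hjS with h | h
    · have := (Finset.mem_filter.1 h).2
      rw [this] at hxj0
      norm_num at hxj0
    · exact (Finset.mem_filter.1 h).2
  refine ⟨j, ⟨hyj1, by simp [hxj0]⟩, v, hvextP, ?_⟩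
  ext ℓ
  simp only [Set.mem_setOf_eq, Set.mem_insert_iff, Set.mem_diff, Set.mem_singleton_iff]
  constructor
  · intro hvℓ
    by_cases hℓj : ℓ = j
    · exact Or.inl hℓj
    · by_cases hℓi : ℓ = i
      · rw [hℓi, hvi0] at hvℓ; norm_num at hvℓ
      · exact Or.inr ⟨(hother ℓ hℓi hℓj) ▸ hvℓ, hℓi⟩
  · rintro (rfl | ⟨hxℓ, hℓi⟩)
    · exact hvj1
    · by_cases hℓj : ℓ = j
      · rw [hℓj]; exact hvj1
      · rw [hother ℓ hℓi hℓj]; exact hxℓ
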